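/- arXiv:2112.12174 — 2 statements merged into one kernel-verified Lean document; each statement's English description precedes it below -/
import Mathlib

section
/- If Λ = k(Γ,A,I) is a generalized bound path algebra, then its opposite algebra Λ^op is isomorphic to k(Γ^op, A^op, I^op), where Γ^op is the opposite quiver, A^op = (A_i^op)_{i∈Γ₀}, and I^op is the set of relations obtained from I by reversing arrows. -/
open Quiver MulOpposite

inductive Gen (V : Type) [Quiver.{0} V] (A : V → Type) : Type
  | vert : (i : V) → A i → Gen V A
  | arrow : {i j : V} → (i ⟶ j) → Gen V A

variable (k : Type) [Field k]
variable (V : Type) [Fintype V] [DecidableEq V] [Quiver.{0} V]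
variable (A : V → Type) [∀ i, Ring (A i)] [∀ i, Algebra k (A i)]

/-- The defining relations of the generalized (bound) path algebra `k(Γ,𝒜,I)`:
multilinearity/multiplicativity in each vertex algebra, orthogonality of the
vertex components, the identity `∑ᵢ 1_{Aᵢ} = 1`, unit relations for arrows,
together with the bound relations coming from the set `R` (the interleaved
relations `𝒜(I)` induced by the admissible set of relations `I`). -/
inductive GPARel (R : Set (FreeAlgebra k (Gen V A))) :
    FreeAlgebra k (Gen V A) → FreeAlgebra k (Gen V A) → Prop
  | add (i : V) (a b : A i) :
      GPARel R (FreeAlgebra.ι k (Gen.vert i (a + b)))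
        (FreeAlgebra.ι k (Gen.vert i a) + FreeAlgebra.ι k (Gen.vert i b))
  | smul (i : V) (c : k) (a : A i) :
      GPARel R (FreeAlgebra.ι k (Gen.vert i (c • a))) (c • FreeAlgebra.ι k (Gen.vert i a))
  | mul (i : V) (a b : A i) :
      GPARel R (FreeAlgebra.ι k (Gen.vert i (a * b)))
        (FreeAlgebra.ι k (Gen.vert i a) * FreeAlgebra.ι k (Gen.vert i b))
  | orth {i j : V} (h : i ≠ j) (a : A i) (b : A j) :
      GPARel R (FreeAlgebra.ι k (Gen.vert i a) * FreeAlgebra.ι k (Gen.vert j b)) 0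
  | sum_one :
      GPARel R (∑ i : V, FreeAlgebra.ι k (Gen.vert i (1 : A i))) 1
  | arrow_left {i j : V} (α : i ⟶ j) :
      GPARel R (FreeAlgebra.ι k (Gen.vert i (1 : A i)) * FreeAlgebra.ι k (Gen.arrow α))
        (FreeAlgebra.ι k (Gen.arrow α))
  | arrow_right {i j : V} (α : i ⟶ j) :
      GPARel R (FreeAlgebra.ι k (Gen.arrow α) * FreeAlgebra.ι k (Gen.vert j (1 : A j)))
        (FreeAlgebra.ι k (Gen.arrow α))
  | arrow_zero_left {i j l : V} (α : i ⟶ j) (h : l ≠ i) (a : A l) :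
      GPARel R (FreeAlgebra.ι k (Gen.vert l a) * FreeAlgebra.ι k (Gen.arrow α)) 0
  | arrow_zero_right {i j l : V} (α : i ⟶ j) (h : l ≠ j) (a : A l) :
      GPARel R (FreeAlgebra.ι k (Gen.arrow α) * FreeAlgebra.ι k (Gen.vert l a)) 0
  | bound (r : FreeAlgebra k (Gen V A)) (h : r ∈ R) : GPARel R r 0

/-- The generalized bound path algebra `k(Γ,𝒜,I)` (for `R = ∅` this is the
generalized path algebra `k(Γ,𝒜)`). -/
abbrev GPA (R : Set (FreeAlgebra k (Gen V A))) : Type := RingQuot (GPARel k V A R)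

variable (R : Set (FreeAlgebra k (Gen V A)))

/-- The canonical (non-unital) embedding of the vertex algebra `A i` into `k(Γ,𝒜,I)`. -/
noncomputable def ιV (i : V) (a : A i) : GPA k V A R :=
  RingQuot.mkAlgHom k (GPARel k V A R) (FreeAlgebra.ι k (Gen.vert i a))

/-- The class of an arrow `α` of `Γ` in `k(Γ,𝒜,I)`. -/
noncomputable def ιA {i j : V} (α : i ⟶ j) : GPA k V A R :=
  RingQuot.mkAlgHom k (GPARel k V A R) (FreeAlgebra.ι k (Gen.arrow α))

/-- The idempotent `1_{Aᵢ}` of `k(Γ,𝒜,I)` attached to the vertex `i`. -/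
noncomputable def eV (i : V) : GPA k V A R := ιV k V A R i 1

noncomputable instance : Fintype Vᵒᵖ := Fintype.ofEquiv V Opposite.equivToOpposite
instance : DecidableEq Vᵒᵖ := Opposite.equivToOpposite.symm.injective.decidableEq

/-- The opposite family of algebras `𝒜ᵒᵖ` on the opposite quiver. -/
abbrev Aop (i : Vᵒᵖ) : Type := (A i.unop)ᵐᵒᵖ

/-- The reversal map on the free path-algebra: it sends a generalized path to the reversed
generalized path over the opposite quiver with opposite vertex algebras. -/
noncomputable def revF : FreeAlgebra k (Gen V A) →ₐ[k] (FreeAlgebra k (Gen Vᵒᵖ (Aop V A)))ᵐᵒᵖ :=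
  FreeAlgebra.lift k fun g =>
    match g with
    | Gen.vert i a => op (FreeAlgebra.ι k (Gen.vert (Opposite.op i) (op a)))
    | Gen.arrow α => op (FreeAlgebra.ι k (Gen.arrow α.op))

/-- The reversal map in the other direction. -/
noncomputable def revG : FreeAlgebra k (Gen Vᵒᵖ (Aop V A)) →ₐ[k] (FreeAlgebra k (Gen V A))ᵐᵒᵖ :=
  FreeAlgebra.lift k fun g =>
    match g with
    | Gen.vert i a => op (FreeAlgebra.ι k (Gen.vert i.unop a.unop))
    | Gen.arrow α => op (FreeAlgebra.ι k (Gen.arrow α.unop))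

theorem revG_revF (x : FreeAlgebra k (Gen V A)) :
    unop (revG k V A (unop (revF k V A x))) = x := by
  have h : ((AlgEquiv.opOp k (FreeAlgebra k (Gen V A))).symm.toAlgHom.comp
      ((AlgHom.op (revG k V A)).comp (revF k V A))) = AlgHom.id k _ := by
    apply FreeAlgebra.hom_ext
    funext g
    cases g with
    | vert i a => simp [revF, revG]
    | arrow α => simp [revF, revG]
  have := congrArg (fun f => f x) h
  simpa using this

theorem revF_revG (x : FreeAlgebra k (Gen Vᵒᵖ (Aop V A))) :
    unop (revF k V A (unop (revG k V A x))) = x := by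
  have h : ((AlgEquiv.opOp k (FreeAlgebra k (Gen Vᵒᵖ (Aop V A)))).symm.toAlgHom.comp
      ((AlgHom.op (revF k V A)).comp (revG k V A))) = AlgHom.id k _ := by
    apply FreeAlgebra.hom_ext
    funext g
    cases g with
    | vert i a => simp [revF, revG]
    | arrow α => simp [revF, revG]
  have := congrArg (fun f => f x) h
  simpa using this

theorem rel_mapF (R : Set (FreeAlgebra k (Gen V A))) {x y : FreeAlgebra k (Gen V A)}
    (h : GPARel k V A R x y) :
    RingQuot.mkAlgHom k (GPARel k Vᵒᵖ (Aop V A) ((fun x => unop (revF k V A x)) '' R))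
        (unop (revF k V A x)) =
    RingQuot.mkAlgHom k (GPARel k Vᵒᵖ (Aop V A) ((fun x => unop (revF k V A x)) '' R))
        (unop (revF k V A y)) := by
  set R' := (fun x => unop (revF k V A x)) '' R with hR'
  set mk2 := RingQuot.mkAlgHom k (GPARel k Vᵒᵖ (Aop V A) R') with hmk2
  induction h with
  | add i a b =>
      have h1 := RingQuot.mkAlgHom_rel k (GPARel.add (R := R') (Opposite.op i) (op a) (op b))
      simp only [map_add] at h1
      simp [revF, hmk2, h1]
  | smul i c a =>
      have h1 := RingQuot.mkAlgHom_rel k (GPARel.smul (R := R') (Opposite.op i) c (op a))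
      simp only [map_smul] at h1
      simp [revF, hmk2, op_smul, h1]
  | mul i a b =>
      have h1 := RingQuot.mkAlgHom_rel k (GPARel.mul (R := R') (Opposite.op i) (op b) (op a))
      simp only [map_mul] at h1
      simp [revF, hmk2, op_mul, h1]
  | @orth i j h a b =>
      have h' : (Opposite.op j) ≠ (Opposite.op i) := fun he => h (congrArg Opposite.unop he).symm
      have h1 := RingQuot.mkAlgHom_rel k (GPARel.orth (R := R') h' (op b) (op a))
      simp only [map_mul, map_zero] at h1
      simp [revF, hmk2, h1]
  | sum_one =>
      have h1 := RingQuot.mkAlgHom_rel k (GPARel.sum_one (R := R'))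
      simp only [map_sum, map_one] at h1
      have h2 : ∑ i : V, mk2 (FreeAlgebra.ι k (Gen.vert (Opposite.op i) (1 : Aop V A (Opposite.op i)))) = 1 := by
        rw [← h1]
        exact Fintype.sum_equiv Opposite.equivToOpposite _ _ (fun i => rfl)
      simp [revF, h2]
  | arrow_left α =>
      have h1 := RingQuot.mkAlgHom_rel k (GPARel.arrow_right (R := R') α.op)
      simp only [map_mul] at h1
      simp [revF, hmk2, h1]
  | arrow_right α =>
      have h1 := RingQuot.mkAlgHom_rel k (GPARel.arrow_left (R := R') α.op)
      simp only [map_mul] at h1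
      simp [revF, hmk2, h1]
  | @arrow_zero_left i j l α h a =>
      have h' : (Opposite.op l) ≠ (Opposite.op i) := fun he => h (congrArg Opposite.unop he)
      have h1 := RingQuot.mkAlgHom_rel k (GPARel.arrow_zero_right (R := R') α.op h' (op a))
      simp only [map_mul, map_zero] at h1
      simp [revF, hmk2, h1]
  | @arrow_zero_right i j l α h a =>
      have h' : (Opposite.op l) ≠ (Opposite.op j) := fun he => h (congrArg Opposite.unop he)
      have h1 := RingQuot.mkAlgHom_rel k (GPARel.arrow_zero_left (R := R') α.op h' (op a))
      simp only [map_mul, map_zero] at h1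
      simp [revF, hmk2, h1]
  | bound r hr =>
      have h1 := RingQuot.mkAlgHom_rel k
        (GPARel.bound (R := R') (unop (revF k V A r)) ⟨r, hr, rfl⟩)
      simpa using h1

theorem rel_mapG (R : Set (FreeAlgebra k (Gen V A)))
    {x y : FreeAlgebra k (Gen Vᵒᵖ (Aop V A))}
    (h : GPARel k Vᵒᵖ (Aop V A) ((fun x => unop (revF k V A x)) '' R) x y) :
    RingQuot.mkAlgHom k (GPARel k V A R) (unop (revG k V A x)) =
    RingQuot.mkAlgHom k (GPARel k V A R) (unop (revG k V A y)) := by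
  set mk1 := RingQuot.mkAlgHom k (GPARel k V A R) with hmk1
  induction h with
  | add i a b =>
      have h1 := RingQuot.mkAlgHom_rel k (GPARel.add (R := R) i.unop a.unop b.unop)
      simp only [map_add] at h1
      simp [revG, hmk1, unop_add, h1]
  | smul i c a =>
      have h1 := RingQuot.mkAlgHom_rel k (GPARel.smul (R := R) i.unop c a.unop)
      simp only [map_smul] at h1
      simp [revG, hmk1, unop_smul, h1]
  | mul i a b =>
      have h1 := RingQuot.mkAlgHom_rel k (GPARel.mul (R := R) i.unop b.unop a.unop)
      simp only [map_mul] at h1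
      simp [revG, hmk1, unop_mul, h1]
  | @orth i j h a b =>
      have h' : j.unop ≠ i.unop := fun he => h (congrArg Opposite.op he).symm
      have h1 := RingQuot.mkAlgHom_rel k (GPARel.orth (R := R) h' b.unop a.unop)
      simp only [map_mul, map_zero] at h1
      simp [revG, hmk1, h1]
  | sum_one =>
      have h1 := RingQuot.mkAlgHom_rel k (GPARel.sum_one (R := R))
      simp only [map_sum, map_one] at h1
      have h2 : ∑ i : Vᵒᵖ, mk1 (FreeAlgebra.ι k (Gen.vert i.unop (1 : A i.unop))) = 1 := by
        rw [← h1]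
        exact Fintype.sum_equiv Opposite.equivToOpposite.symm _ _ (fun i => rfl)
      simp [revG, h2]
  | arrow_left α =>
      have h1 := RingQuot.mkAlgHom_rel k (GPARel.arrow_right (R := R) α.unop)
      simp only [map_mul] at h1
      simp [revG, hmk1, h1]
  | arrow_right α =>
      have h1 := RingQuot.mkAlgHom_rel k (GPARel.arrow_left (R := R) α.unop)
      simp only [map_mul] at h1
      simp [revG, hmk1, h1]
  | @arrow_zero_left i j l α h a =>
      have h' : l.unop ≠ i.unop := fun he => h (congrArg Opposite.op he)
      have h1 := RingQuot.mkAlgHom_rel k (GPARel.arrow_zero_right (R := R) α.unop h' a.unop)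
      simp only [map_mul, map_zero] at h1
      simp [revG, hmk1, h1]
  | @arrow_zero_right i j l α h a =>
      have h' : l.unop ≠ j.unop := fun he => h (congrArg Opposite.op he)
      have h1 := RingQuot.mkAlgHom_rel k (GPARel.arrow_zero_left (R := R) α.unop h' a.unop)
      simp only [map_mul, map_zero] at h1
      simp [revG, hmk1, h1]
  | bound r hr =>
      obtain ⟨s, hs, rfl⟩ := hr
      have h1 := RingQuot.mkAlgHom_rel k (GPARel.bound (R := R) s hs)
      simp only [map_zero]
      rw [revG_revF]
      simpa using h1
/-- If `Λ = k(Γ,𝒜,I)` is a generalized bound path algebra, then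
`Λᵒᵖ ≅ k(Γᵒᵖ,𝒜ᵒᵖ,Iᵒᵖ)`, where `Iᵒᵖ` is obtained from `I` by reversing arrows. -/
theorem gbp_op_iso (R : Set (FreeAlgebra k (Gen V A))) :
    Nonempty ((GPA k V A R)ᵐᵒᵖ ≃ₐ[k]
      GPA k Vᵒᵖ (Aop V A) ((fun x => unop (revF k V A x)) '' R)) := by
  classical
  set R' := (fun x => unop (revF k V A x)) '' R with hR'
  set mk1 := RingQuot.mkAlgHom k (GPARel k V A R) with hmk1
  set mk2 := RingQuot.mkAlgHom k (GPARel k Vᵒᵖ (Aop V A) R') with hmk2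
  have wF : ∀ ⦃x y⦄, GPARel k V A R x y →
      ((AlgHom.op mk2).comp (revF k V A)) x = ((AlgHom.op mk2).comp (revF k V A)) y :=
    fun x y h => congrArg op (rel_mapF k V A R h)
  have wG : ∀ ⦃x y⦄, GPARel k Vᵒᵖ (Aop V A) R' x y →
      ((AlgHom.op mk1).comp (revG k V A)) x = ((AlgHom.op mk1).comp (revG k V A)) y :=
    fun x y h => congrArg op (rel_mapG k V A R h)
  set F : GPA k V A R →ₐ[k] (GPA k Vᵒᵖ (Aop V A) R')ᵐᵒᵖ :=
    RingQuot.liftAlgHom k ⟨(AlgHom.op mk2).comp (revF k V A), wF⟩ with hF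
  set G : GPA k Vᵒᵖ (Aop V A) R' →ₐ[k] (GPA k V A R)ᵐᵒᵖ :=
    RingQuot.liftAlgHom k ⟨(AlgHom.op mk1).comp (revG k V A), wG⟩ with hG
  have hFapp : ∀ x, F (mk1 x) = op (mk2 (unop (revF k V A x))) := fun x =>
    RingQuot.liftAlgHom_mkAlgHom_apply k _ wF x
  have hGapp : ∀ x, G (mk2 x) = op (mk1 (unop (revG k V A x))) := fun x =>
    RingQuot.liftAlgHom_mkAlgHom_apply k _ wG x
  have h₂ : (AlgHom.opComm G).comp F = AlgHom.id k (GPA k V A R) := by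
    apply RingQuot.ringQuot_ext'
    apply AlgHom.ext
    intro x
    simp only [AlgHom.comp_apply, AlgHom.id_apply, ← hmk1]
    rw [hFapp]
    simp only [AlgHom.opComm_apply_apply]
    simp only [unop_op]
    rw [hGapp, revG_revF]
    simp
  have h₁ : F.comp (AlgHom.opComm G) = AlgHom.id k (GPA k Vᵒᵖ (Aop V A) R')ᵐᵒᵖ := by
    apply AlgHom.ext
    intro y
    obtain ⟨w, hw⟩ := RingQuot.mkAlgHom_surjective k (GPARel k Vᵒᵖ (Aop V A) R') (unop y)
    have hy : y = op (mk2 w) := by rw [hmk2, hw, op_unop]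
    rw [hy]
    simp only [AlgHom.comp_apply, AlgHom.id_apply, AlgHom.opComm_apply_apply]
    simp only [unop_op]
    rw [hGapp]
    simp only [unop_op]
    rw [hFapp, revF_revG]
  exact ⟨AlgEquiv.opComm (AlgEquiv.ofAlgHom F (AlgHom.opComm G) h₁ h₂)⟩
end

section
/- Let E_i = {e_{i1},…,e_{is_i}} be a complete set of primitive pairwise orthogonal idempotents of A_i, and let P_i^j = e_{ij}A_i be the corresponding indecomposable projective A_i-module. Then for every i ∈ Γ₀ and 1 ≤ j ≤ s_i, the indecomposable projective Λ-module P(i,j) = ē_{ij}Λ equals the cone C_i(P_i^j). -/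
open Quiver MulOpposite

variable (k : Type) [Field k]
variable (V : Type) [Fintype V] [DecidableEq V] [Quiver.{0} V]
variable (A : V → Type) [∀ i, Ring (A i)] [∀ i, Algebra k (A i)]

variable (R : Set (FreeAlgebra k (Gen V A)))

section Cone

variable (i : V) (M : Type) [AddCommGroup M] [Module k M] [Module (A i)ᵐᵒᵖ M]
variable (C : Type) [AddCommGroup C] [Module k C] [Module (GPA k V A R)ᵐᵒᵖ C]
  [IsScalarTower k (GPA k V A R)ᵐᵒᵖ C]

/-- `C`, together with the `k`-linear structure map `η : M → C`, is *the cone*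
`𝒞ᵢ(M) = M ⊗_{A_𝒜} Λ` over the right `A i`-module `M`: this is the universal
property of the extension of scalars along `A_𝒜 = ∏ᵢ Aᵢ → Λ`, where the
`A_𝒜`-module structure on `M` is via the projection onto the `i`-th factor. -/
structure IsCone (η : M →ₗ[k] C) : Prop where
  compat : ∀ (a : A i) (m : M), η (op a • m) = op (ιV k V A R i a) • η m
  supp : ∀ (l : V), l ≠ i → ∀ (b : A l) (m : M), op (ιV k V A R l b) • η m = 0
  univ : ∀ (X : Type) [AddCommGroup X] [Module k X] [Module (GPA k V A R)ᵐᵒᵖ X]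
      [IsScalarTower k (GPA k V A R)ᵐᵒᵖ X] (g : M →ₗ[k] X),
      (∀ (a : A i) (m : M), g (op a • m) = op (ιV k V A R i a) • g m) →
      (∀ (l : V), l ≠ i → ∀ (b : A l) (m : M), op (ιV k V A R l b) • g m = 0) →
      ∃! h : C →ₗ[(GPA k V A R)ᵐᵒᵖ] X, ∀ m, h (η m) = g m

/-- `C`, together with the `k`-linear costructure map `ε : C → M`, is *the dual
cone* `𝒞ᵢ*(M) = D(𝒞ᵢ(DM))` over the right `A i`-module `M`: this is the universal
property of the coextension of scalars along `A_𝒜 = ∏ᵢ Aᵢ → Λ`. -/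
structure IsDualCone (ε : C →ₗ[k] M) : Prop where
  compat : ∀ (a : A i) (c : C), ε (op (ιV k V A R i a) • c) = op a • ε c
  supp : ∀ (l : V), l ≠ i → ∀ (b : A l) (c : C), ε (op (ιV k V A R l b) • c) = 0
  univ : ∀ (X : Type) [AddCommGroup X] [Module k X] [Module (GPA k V A R)ᵐᵒᵖ X]
      [IsScalarTower k (GPA k V A R)ᵐᵒᵖ X] (g : X →ₗ[k] M),
      (∀ (a : A i) (x : X), g (op (ιV k V A R i a) • x) = op a • g x) →
      (∀ (l : V), l ≠ i → ∀ (b : A l) (x : X), g (op (ιV k V A R l b) • x) = 0) →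
      ∃! h : X →ₗ[(GPA k V A R)ᵐᵒᵖ] C, ∀ x, ε (h x) = g x

end Cone

/-- An idempotent is *primitive* if it is nonzero and cannot be written as a sum of two
nonzero orthogonal idempotents. -/
def IsPrimitiveIdem {B : Type} [Ring B] (x : B) : Prop :=
  IsIdempotentElem x ∧ x ≠ 0 ∧
    ∀ a b : B, IsIdempotentElem a → IsIdempotentElem b → a * b = 0 → b * a = 0 →
      a + b = x → a = 0 ∨ b = 0

section Aux

lemma ιV_add (i : V) (a b : A i) :
    ιV k V A R i (a + b) = ιV k V A R i a + ιV k V A R i b := by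
  have := RingQuot.mkAlgHom_rel k (GPARel.add (R := R) i a b)
  simpa [ιV, map_add] using this

lemma ιV_smul (i : V) (c : k) (a : A i) :
    ιV k V A R i (c • a) = c • ιV k V A R i a := by
  have := RingQuot.mkAlgHom_rel k (GPARel.smul (R := R) i c a)
  simpa [ιV, map_smul] using this

lemma ιV_mul (i : V) (a b : A i) :
    ιV k V A R i (a * b) = ιV k V A R i a * ιV k V A R i b := by
  have := RingQuot.mkAlgHom_rel k (GPARel.mul (R := R) i a b)
  simpa [ιV, map_mul] using this

lemma ιV_orth {i l : V} (h : i ≠ l) (a : A i) (b : A l) :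
    ιV k V A R i a * ιV k V A R l b = 0 := by
  have := RingQuot.mkAlgHom_rel k (GPARel.orth (R := R) h a b)
  simpa [ιV, map_mul] using this

end Aux

/-- Let `E i = {e_{i1},…,e_{is_i}}` be a complete set of primitive pairwise
orthogonal idempotents of `A i`, and `P_i^j = e_{ij}·A i` the corresponding indecomposable
projective right `A i`-module.  Then the indecomposable projective `Λ`-module
`P(i,j) = ē_{ij}·Λ` is exactly the cone `𝒞ᵢ(P_i^j)` (via the canonical map `x ↦ x̄`). -/
theorem projective_is_cone (i : V) (s : ℕ) (E : Fin s → A i)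
    (hprim : ∀ j, IsPrimitiveIdem (E j))
    (horth : ∀ j j', j ≠ j' → E j * E j' = 0)
    (hsum : ∑ j, E j = 1) (j : Fin s) :
    ∃ η : ↥(Submodule.span ((A i)ᵐᵒᵖ) ({E j} : Set (A i))) →ₗ[k]
        ↥(Submodule.span ((GPA k V A R)ᵐᵒᵖ) ({ιV k V A R i (E j)} : Set (GPA k V A R))),
      (∀ x : ↥(Submodule.span ((A i)ᵐᵒᵖ) ({E j} : Set (A i))),
        (η x : GPA k V A R) = ιV k V A R i (x : A i)) ∧
      IsCone k V A R i ↥(Submodule.span ((A i)ᵐᵒᵖ) ({E j} : Set (A i)))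
        ↥(Submodule.span ((GPA k V A R)ᵐᵒᵖ) ({ιV k V A R i (E j)} : Set (GPA k V A R))) η := by
  classical
  set e : A i := E j with he
  set ebar : GPA k V A R := ιV k V A R i e with hebar
  set M := Submodule.span ((A i)ᵐᵒᵖ) ({e} : Set (A i)) with hM
  set C := Submodule.span ((GPA k V A R)ᵐᵒᵖ) ({ebar} : Set (GPA k V A R)) with hC
  -- the image of any element of M lies in C
  have hmem : ∀ x : M, ιV k V A R i (x : A i) ∈ C := by
    rintro ⟨x, hx⟩
    rw [hM, Submodule.mem_span_singleton] at hx
    obtain ⟨a, rfl⟩ := hx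
    have : ιV k V A R i (a • e) = op (ιV k V A R i a.unop) • ebar := by
      rw [show (a • e) = e * a.unop from rfl, ιV_mul]
      rfl
    rw [this]
    exact Submodule.smul_mem _ _ (Submodule.mem_span_singleton_self _)
  refine ⟨{ toFun := fun x => ⟨ιV k V A R i (x : A i), hmem x⟩
            map_add' := by
              intro x y
              ext
              simp [ιV_add]
            map_smul' := by
              intro c x
              ext
              simp [ιV_smul] }, fun x => rfl, ?_, ?_, ?_⟩
  · -- compat
    intro a m
    ext
    simp only [LinearMap.coe_mk, AddHom.coe_mk]
    have h1 : ((op a • m : M) : A i) = (m : A i) * a := rfl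
    rw [h1, ιV_mul]
    rfl
  · -- supp
    intro l hl b m
    ext
    have : (op (ιV k V A R l b) •
        (⟨ιV k V A R i (m : A i), hmem m⟩ : C) : C) =
        ⟨ιV k V A R i (m : A i) * ιV k V A R l b, by
          rw [show ιV k V A R i (m : A i) * ιV k V A R l b =
            op (ιV k V A R l b) • ιV k V A R i (m : A i) from rfl]
          exact Submodule.smul_mem _ _ (hmem m)⟩ := rfl
    simp only [LinearMap.coe_mk, AddHom.coe_mk] at this ⊢
    rw [this]
    have := ιV_orth k V A R (Ne.symm hl) (m : A i) b
    simp [this]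
  · -- universal property
    intro X _ _ _ _ g hcompat hsupp
    set m₀ : M := ⟨e, Submodule.mem_span_singleton_self _⟩ with hm₀
    -- the fixed-point property of g m₀
    have hfix : op ebar • g m₀ = g m₀ := by
      have h1 : (op e • m₀ : M) = m₀ := by
        ext
        show (m₀ : A i) * e = e
        simpa [hm₀] using (hprim j).1.eq
      have := hcompat e m₀
      rw [h1] at this
      exact this.symm
    refine ⟨{ toFun := fun c => op (c : GPA k V A R) • g m₀
              map_add' := by
                intro c d
                simp [add_smul]
              map_smul' := by
                intro r c
                show op ((r • c : C) : GPA k V A R) • g m₀ = r • op (c : GPA k V A R) • g m₀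
                have : ((r • c : C) : GPA k V A R) = (c : GPA k V A R) * r.unop := rfl
                rw [this]
                rw [show op ((c : GPA k V A R) * r.unop) = r * op (c : GPA k V A R) by
                  simp]
                rw [mul_smul] }, ?_, ?_⟩
    · -- h ∘ η = g
      intro m
      obtain ⟨x, hx⟩ := m
      have hx' := hx
      rw [hM, Submodule.mem_span_singleton] at hx'
      obtain ⟨a, ha⟩ := hx'
      show op (ιV k V A R i x) • g m₀ = g ⟨x, hx⟩
      have hxe : x = e * a.unop := by rw [← ha]; rfl
      have hmeq : (⟨x, hx⟩ : M) = op a.unop • m₀ := by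
        ext
        show x = e * a.unop
        exact hxe
      rw [hmeq, hcompat]
      rw [hxe, ιV_mul]
      rw [show op (ιV k V A R i e * ιV k V A R i a.unop) =
        op (ιV k V A R i a.unop) * op (ιV k V A R i e) by simp]
      rw [mul_smul, ← hebar, hfix]
    · -- uniqueness
      intro h' hh'
      ext c
      obtain ⟨c, hc⟩ := c
      have hc' := hc
      rw [hC, Submodule.mem_span_singleton] at hc'
      obtain ⟨r, hr⟩ := hc'
      have hηm₀ : (⟨e, Submodule.mem_span_singleton_self _⟩ : M) = m₀ := rfl
      have hceq : (⟨c, hc⟩ : C) = r • ⟨ebar, Submodule.mem_span_singleton_self _⟩ := by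
        ext
        exact hr.symm
      have hkey : h' ⟨ebar, Submodule.mem_span_singleton_self _⟩ = g m₀ := by
        have := hh' m₀
        convert this using 2
        rfl
      rw [hceq, map_smul, hkey]
      show r • g m₀ = op ((r • (⟨ebar, Submodule.mem_span_singleton_self _⟩ : C) : C) :
        GPA k V A R) • g m₀
      have : ((r • (⟨ebar, Submodule.mem_span_singleton_self _⟩ : C) : C) :
          GPA k V A R) = ebar * r.unop := rfl
      rw [this, show op (ebar * r.unop) = r * op ebar by simp, mul_smul, hfix]
end
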